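/- Let $\mathbf{P}_i$ be the set of closed walks of length $T$ from a fixed station $\sigma_i$ in a finite graph (with self-loops allowed), and define $A_i \subseteq \mathbf{P}_i$ as a minimum-cardinality subset satisfying: (i) every $p \in A_i$ has at least one stay ($\exists t: p^t = p^{t+1}$), and (ii) every $q \in \mathbf{P}_i \setminus A_i$ is dominated by some $p \in A_i$ (every stay of $q$ is a stay of $p$ at the same time and cell). Then, for any task specifications with nonnegative values, $\max_{\mathbf{p} \in \mathbf{P}} f(\mathbf{p}) = \max_{\mathbf{p} \in A} f(\mathbf{p})$, where $\mathbf{P} = \prod_i \mathbf{P}_i$, $A = \prod_i A_i$, and $f$ is the total value of completed tasks. -/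

import Mathlib

open scoped Classical

/-- Lemma 1: reducing each robot's feasible trajectories to a minimum-cardinality subset of
trajectories with a stay that dominate all excluded trajectories preserves the maximum total
value of completed tasks. -/
theorem stmt12 {V : Type*} [Fintype V] {R : Type*} [Fintype R]
    (adj : V → V → Prop) (σ : R → V) (T : ℕ) (hT : 1 ≤ T)
    (hloop : ∀ i, adj (σ i) (σ i))
    (P : R → Set (Fin (T + 1) → V))
    (hP : ∀ i, P i = {p | p 0 = σ i ∧ p (Fin.last T) = σ i ∧
      ∀ t : Fin T, adj (p t.castSucc) (p t.succ)})
    (A : R → Set (Fin (T + 1) → V))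
    (hAsub : ∀ i, A i ⊆ P i)
    (hstay : ∀ i, ∀ p ∈ A i, ∃ t : Fin T, p t.castSucc = p t.succ)
    (hdom : ∀ i, ∀ q ∈ P i \ A i, ∃ p ∈ A i, ∀ t : Fin T, q t.castSucc = q t.succ →
      p t.castSucc = q t.castSucc ∧ p t.succ = q t.castSucc)
    (hmin : ∀ i, ∀ B ⊆ P i, (∀ p ∈ B, ∃ t : Fin T, p t.castSucc = p t.succ) →
      (∀ q ∈ P i \ B, ∃ p ∈ B, ∀ t : Fin T, q t.castSucc = q t.succ →
        p t.castSucc = q t.castSucc ∧ p t.succ = q t.castSucc) →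
      (A i).ncard ≤ B.ncard)
    {J : Type*} [Fintype J] (cstar : J → ℕ) (l : J → V) (ta td : J → ℕ)
    (v : J → ℝ) (hv : ∀ j, 0 ≤ v j)
    (f : (R → Fin (T + 1) → V) → ℝ)
    (hf : ∀ p, f p = ∑ j ∈ Finset.univ.filter (fun j =>
      ∃ t : Fin T, ta j ≤ (t : ℕ) ∧ (t : ℕ) + 1 ≤ td j ∧
        cstar j ≤ (Finset.univ.filter
          (fun i => p i t.castSucc = l j ∧ p i t.succ = l j)).card), v j) :
    ∃ M : ℝ, IsGreatest (f '' {p | ∀ i, p i ∈ P i}) M ∧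
      IsGreatest (f '' {p | ∀ i, p i ∈ A i}) M := by

  classical
  -- P i is nonempty (constant walk), hence A i is nonempty
  have hPne : ∀ i, (fun _ : Fin (T+1) => σ i) ∈ P i := by
    intro i
    rw [hP i]
    exact ⟨rfl, rfl, fun t => hloop i⟩
  have hAne : ∀ i, (A i).Nonempty := by
    intro i
    by_cases h : (fun _ : Fin (T+1) => σ i) ∈ A i
    · exact ⟨_, h⟩
    · obtain ⟨p, hp, -⟩ := hdom i _ ⟨hPne i, h⟩
      exact ⟨p, hp⟩
  -- key step: any joint plan in P is dominated by one in A
  have key : ∀ p : R → Fin (T+1) → V, (∀ i, p i ∈ P i) →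
      ∃ p', (∀ i, p' i ∈ A i) ∧ f p ≤ f p' := by
    intro p hp
    have hch : ∀ i, ∃ q ∈ A i, ∀ t : Fin T, p i t.castSucc = p i t.succ →
        q t.castSucc = p i t.castSucc ∧ q t.succ = p i t.castSucc := by
      intro i
      by_cases h : p i ∈ A i
      · exact ⟨p i, h, fun t ht => ⟨rfl, ht.symm⟩⟩
      · exact hdom i _ ⟨hp i, h⟩
    choose p' hp'A hp'dom using hch
    refine ⟨p', hp'A, ?_⟩
    rw [hf p, hf p']
    apply Finset.sum_le_sum_of_subset_of_nonneg
    · intro j hj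
      simp only [Finset.mem_filter, Finset.mem_univ, true_and] at hj ⊢
      obtain ⟨t, h1, h2, h3⟩ := hj
      refine ⟨t, h1, h2, le_trans h3 (Finset.card_le_card ?_)⟩
      intro i hi
      simp only [Finset.mem_filter, Finset.mem_univ, true_and] at hi ⊢
      obtain ⟨ha, hb⟩ := hi
      have hstay' : p i t.castSucc = p i t.succ := ha.trans hb.symm
      obtain ⟨h4, h5⟩ := hp'dom i t hstay'
      exact ⟨h4.trans ha, h5.trans ha⟩
    · intro j _ _
      exact hv j
  -- finiteness and nonemptiness of the A-image
  have hfinA : (f '' {p : R → Fin (T+1) → V | ∀ i, p i ∈ A i}).Finite :=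
    (Set.toFinite _).image f
  have hneA : (f '' {p : R → Fin (T+1) → V | ∀ i, p i ∈ A i}).Nonempty := by
    refine ⟨f (fun i => (hAne i).choose), ⟨_, fun i => (hAne i).choose_spec, rfl⟩⟩
  obtain ⟨M, hMmem, hMub⟩ := hfinA.exists_maximalFor id _ hneA
  have hMgrA : IsGreatest (f '' {p | ∀ i, p i ∈ A i}) M := by
    refine ⟨hMmem, fun y hy => ?_⟩
    rcases le_total y M with h | h
    · exact h
    · exact (hMub hy h).ge
  refine ⟨M, ⟨?_, ?_⟩, hMgrA⟩
  · obtain ⟨p, hpA, hpf⟩ := hMmem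
    exact ⟨p, fun i => hAsub i (hpA i), hpf⟩
  · rintro y ⟨p, hpP, rfl⟩
    obtain ⟨p', hp'A, hle⟩ := key p hpP
    exact hle.trans (hMgrA.2 ⟨p', hp'A, rfl⟩)
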